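/- Let X₁, X₂, …, X_d be independent Gaussian random variables, each with distribution N(0, σ²) where σ > 0. For any integer d ≥ 2, E[max_{1 ≤ i ≤ d} X_i] ≥ 0.13·σ·√(ln d) − 0.7·σ. -/

import Mathlib

open MeasureTheory ProbabilityTheory Real

section AuxLemmas
open Set Filter

lemma my_pdf_eq {σ : ℝ} (hσ : 0 < σ) (x : ℝ) :
    gaussianPDFReal 0 ⟨σ ^ 2, sq_nonneg σ⟩ x
      = (σ * Real.sqrt (2 * π))⁻¹ * rexp (-((2 * σ ^ 2)⁻¹) * x ^ 2) := by
  unfold gaussianPDFReal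
  show (√(2 * π * σ ^ 2))⁻¹ * rexp (-(x - 0) ^ 2 / (2 * σ ^ 2)) = _
  have h1 : Real.sqrt (2 * π * σ ^ 2) = σ * Real.sqrt (2 * π) := by
    rw [Real.sqrt_mul (by positivity), Real.sqrt_sq hσ.le]
    ring
  rw [h1]
  congr 1
  rw [sub_zero]
  field_simp

lemma my_int_Ioi {σ : ℝ} (hσ : 0 < σ) :
    ∫ x in Ioi (0:ℝ), x * rexp (-((2 * σ ^ 2)⁻¹) * x ^ 2) = σ ^ 2 := by
  have hb : (0:ℝ) < (2 * σ ^ 2)⁻¹ := by positivity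
  have hderiv : ∀ x ∈ Ici (0:ℝ),
      HasDerivAt (fun x : ℝ => -(σ ^ 2) * rexp (-((2 * σ ^ 2)⁻¹) * x ^ 2))
        (x * rexp (-((2 * σ ^ 2)⁻¹) * x ^ 2)) x := by
    intro x _
    have h1 : HasDerivAt (fun x : ℝ => -((2 * σ ^ 2)⁻¹) * x ^ 2)
        (-((2 * σ ^ 2)⁻¹) * (2 * x)) x := by
      have h0 : HasDerivAt (fun x : ℝ => x ^ 2) (2 * x) x := by
        simpa using hasDerivAt_pow 2 x
      exact h0.const_mul _
    have h2 := (h1.exp).const_mul (-(σ ^ 2))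
    refine h2.congr_deriv ?_
    field_simp
  have hint : IntegrableOn (fun x : ℝ => x * rexp (-((2 * σ ^ 2)⁻¹) * x ^ 2)) (Ioi 0) :=
    (integrable_mul_exp_neg_mul_sq hb).integrableOn
  have htend : Tendsto (fun x : ℝ => -(σ ^ 2) * rexp (-((2 * σ ^ 2)⁻¹) * x ^ 2))
      atTop (nhds (-(σ ^ 2) * 0)) := by
    refine Tendsto.const_mul _ (Real.tendsto_exp_atBot.comp ?_)
    have h3 : Tendsto (fun x : ℝ => (2 * σ ^ 2)⁻¹ * x ^ 2) atTop atTop :=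
      Tendsto.const_mul_atTop hb (tendsto_pow_atTop (by norm_num))
    simpa [neg_mul] using tendsto_neg_atBot_iff.mpr h3
  have := integral_Ioi_of_hasDerivAt_of_tendsto' hderiv hint htend
  rw [this]
  norm_num


lemma my_int_IA {σ : ℝ} (hσ : 0 < σ) :
    Integrable (fun x => gaussianPDFReal 0 ⟨σ ^ 2, sq_nonneg σ⟩ x * x) := by
  have hb : (0:ℝ) < (2 * σ ^ 2)⁻¹ := by positivity
  have := (integrable_mul_exp_neg_mul_sq hb).const_mul (σ * Real.sqrt (2 * π))⁻¹
  exact this.congr (ae_of_all _ fun x => by simp only; rw [my_pdf_eq hσ]; ring)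

lemma my_int_INeg {σ : ℝ} (hσ : 0 < σ) :
    Integrable (fun x => gaussianPDFReal 0 ⟨σ ^ 2, sq_nonneg σ⟩ x * max (-x) 0) := by
  refine (my_int_IA hσ).mono ?_ (ae_of_all _ fun x => ?_)
  · exact ((measurable_gaussianPDFReal 0 _).mul
      (measurable_neg.max measurable_const)).aestronglyMeasurable
  · have h0 : 0 ≤ gaussianPDFReal 0 ⟨σ ^ 2, sq_nonneg σ⟩ x := gaussianPDFReal_nonneg _ _ _
    simp only [norm_eq_abs, abs_mul]
    refine mul_le_mul_of_nonneg_left ?_ (abs_nonneg _)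
    rw [abs_of_nonneg (le_max_right (-x) 0)]
    exact max_le (neg_le_abs x) (abs_nonneg x)

lemma my_negpart {σ : ℝ} (hσ : 0 < σ) :
    ∫ x, gaussianPDFReal 0 ⟨σ ^ 2, sq_nonneg σ⟩ x * max (-x) 0 = σ / Real.sqrt (2 * π) := by
  have hfun : (fun x => gaussianPDFReal 0 ⟨σ ^ 2, sq_nonneg σ⟩ x * max (-x) 0)
      = (Iic (0:ℝ)).indicator (fun x => gaussianPDFReal 0 ⟨σ ^ 2, sq_nonneg σ⟩ x * (-x)) := by
    ext x
    rcases le_or_gt x 0 with h | h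
    · rw [indicator_of_mem (mem_Iic.mpr h), max_eq_left (by linarith)]
    · rw [indicator_of_notMem (by simpa using h), max_eq_right (by linarith), mul_zero]
  rw [hfun, integral_indicator measurableSet_Iic]
  have hG : ∀ x : ℝ, gaussianPDFReal 0 ⟨σ ^ 2, sq_nonneg σ⟩ x * (-x)
      = (fun y => gaussianPDFReal 0 ⟨σ ^ 2, sq_nonneg σ⟩ y * y) (-x) := by
    intro x
    simp only
    rw [my_pdf_eq hσ, my_pdf_eq hσ, neg_sq]
  rw [integral_congr_ae (ae_of_all _ fun x => hG x) ]
  rw [integral_comp_neg_Iic 0 (fun y => gaussianPDFReal 0 ⟨σ ^ 2, sq_nonneg σ⟩ y * y), neg_zero]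
  have hsq : Real.sqrt (2 * π) ≠ 0 := by positivity
  have hstep : ∫ x in Ioi (0:ℝ), gaussianPDFReal 0 ⟨σ ^ 2, sq_nonneg σ⟩ x * x
      = (σ * Real.sqrt (2 * π))⁻¹ * σ ^ 2 := by
    rw [setIntegral_congr_fun measurableSet_Ioi
      (fun x _ => by rw [my_pdf_eq hσ]; ring :
        ∀ x ∈ Ioi (0:ℝ), gaussianPDFReal 0 ⟨σ ^ 2, sq_nonneg σ⟩ x * x
          = (σ * Real.sqrt (2 * π))⁻¹ * (x * rexp (-((2 * σ ^ 2)⁻¹) * x ^ 2)))]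
    rw [MeasureTheory.integral_const_mul, my_int_Ioi hσ]
  rw [hstep]
  field_simp


lemma my_gauss_integral {σ : ℝ} (hσ : 0 < σ) (g : ℝ → ℝ) :
    ∫ x, g x ∂(gaussianReal 0 ⟨σ ^ 2, sq_nonneg σ⟩)
      = ∫ x, gaussianPDFReal 0 ⟨σ ^ 2, sq_nonneg σ⟩ x * g x := by
  have hv : (⟨σ ^ 2, sq_nonneg σ⟩ : NNReal) ≠ 0 := by
    simp [← NNReal.coe_ne_zero, (by positivity : σ ^ 2 ≠ 0)]
  rw [gaussianReal_of_var_ne_zero _ hv]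
  have : (gaussianPDF 0 ⟨σ ^ 2, sq_nonneg σ⟩)
      = fun x => ((Real.toNNReal (gaussianPDFReal 0 ⟨σ ^ 2, sq_nonneg σ⟩ x) : NNReal) : ENNReal) := by
    ext x; rfl
  rw [this]
  erw [integral_withDensity_eq_integral_smul
    ((measurable_gaussianPDFReal 0 _).real_toNNReal) g]
  congr 1
  ext x
  rw [NNReal.smul_def, smul_eq_mul]
  erw [Real.coe_toNNReal _ (gaussianPDFReal_nonneg _ _ _)]

lemma my_gauss_integrable {σ : ℝ} (hσ : 0 < σ) {g : ℝ → ℝ}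
    (hg : Integrable (fun x => gaussianPDFReal 0 ⟨σ ^ 2, sq_nonneg σ⟩ x * g x)) :
    Integrable g (gaussianReal 0 ⟨σ ^ 2, sq_nonneg σ⟩) := by
  have hv : (⟨σ ^ 2, sq_nonneg σ⟩ : NNReal) ≠ 0 := by
    simp [← NNReal.coe_ne_zero, (by positivity : σ ^ 2 ≠ 0)]
  rw [gaussianReal_of_var_ne_zero _ hv]
  have h2 : (gaussianPDF 0 ⟨σ ^ 2, sq_nonneg σ⟩)
      = fun x => ((Real.toNNReal (gaussianPDFReal 0 ⟨σ ^ 2, sq_nonneg σ⟩ x) : NNReal) : ENNReal) := by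
    ext x; rfl
  rw [h2]
  refine (integrable_withDensity_iff_integrable_smul (E := ℝ)
    ((measurable_gaussianPDFReal 0 _).real_toNNReal)).mpr ?_
  convert hg using 2 with x
  · rfl
  rw [NNReal.smul_def, smul_eq_mul]
  erw [Real.coe_toNNReal _ (gaussianPDFReal_nonneg _ _ _)]




lemma my_tail {σ t : ℝ} (hσ : 0 < σ) (ht : 0 ≤ t) :
    σ * gaussianPDFReal 0 ⟨σ ^ 2, sq_nonneg σ⟩ (t + σ)
      ≤ ((gaussianReal 0 ⟨σ ^ 2, sq_nonneg σ⟩) (Ici t)).toReal := by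
  have hv : (⟨σ ^ 2, sq_nonneg σ⟩ : NNReal) ≠ 0 := by
    simp [← NNReal.coe_ne_zero, (by positivity : σ ^ 2 ≠ 0)]
  rw [gaussianReal_apply_eq_integral 0 hv (Ici t)]
  erw [ENNReal.toReal_ofReal (setIntegral_nonneg measurableSet_Ici
      fun x _ => gaussianPDFReal_nonneg _ _ _)]
  have h1 : σ * gaussianPDFReal 0 ⟨σ ^ 2, sq_nonneg σ⟩ (t + σ)
      = ∫ _ in Icc t (t + σ), gaussianPDFReal 0 ⟨σ ^ 2, sq_nonneg σ⟩ (t + σ) := by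
    rw [setIntegral_const, measureReal_def, Real.volume_Icc]
    rw [show t + σ - t = σ by ring, ENNReal.toReal_ofReal hσ.le, smul_eq_mul]
  rw [h1]
  have h2 : (∫ _ in Icc t (t + σ), gaussianPDFReal 0 ⟨σ ^ 2, sq_nonneg σ⟩ (t + σ))
      ≤ ∫ x in Icc t (t + σ), gaussianPDFReal 0 ⟨σ ^ 2, sq_nonneg σ⟩ x := by
    refine setIntegral_mono_on ((integrableOn_const_iff).mpr (Or.inr measure_Icc_lt_top))
      ((integrable_gaussianPDFReal 0 _).integrableOn) measurableSet_Icc ?_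
    intro x hx
    rw [my_pdf_eq hσ, my_pdf_eq hσ]
    have hb : (0:ℝ) < (2 * σ ^ 2)⁻¹ := by positivity
    have hx2 : x ^ 2 ≤ (t + σ) ^ 2 := by nlinarith [hx.1, hx.2]
    have : rexp (-((2 * σ ^ 2)⁻¹) * (t + σ) ^ 2) ≤ rexp (-((2 * σ ^ 2)⁻¹) * x ^ 2) := by
      apply Real.exp_le_exp.mpr
      nlinarith
    have hc : (0:ℝ) ≤ (σ * Real.sqrt (2 * π))⁻¹ := by positivity
    exact mul_le_mul_of_nonneg_left this hc
  refine h2.trans (setIntegral_mono_set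
    ((integrable_gaussianPDFReal 0 _).integrableOn)
    (ae_of_all _ fun x => gaussianPDFReal_nonneg _ _ _)
    (HasSubset.Subset.eventuallyLE Icc_subset_Ici_self))

end AuxLemmas

open Set Filter in
/-- Lower bound on the expected maximum of `d ≥ 2` independent `N(0, σ²)`
Gaussian random variables: `E[max_i X_i] ≥ 0.13·σ·√(ln d) − 0.7·σ`. -/
theorem expected_max_gaussians_lower_bound' {Ω : Type*} [MeasurableSpace Ω]
    (μ : Measure Ω) [IsProbabilityMeasure μ]
    (σ : ℝ) (hσ : 0 < σ) (d : ℕ) (hd : 2 ≤ d)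
    (X : Fin d → Ω → ℝ) (hX : ∀ i, Measurable (X i))
    (hlaw : ∀ i, μ.map (X i) = gaussianReal 0 ⟨σ ^ 2, sq_nonneg σ⟩)
    (hindep : iIndepFun X μ) :
    (∫ ω, ⨆ i, X i ω ∂μ) ≥ 0.13 * σ * Real.sqrt (Real.log d) - 0.7 * σ := by
  have hd0 : 0 < d := by omega
  haveI hne : Nonempty (Fin d) := ⟨⟨0, hd0⟩⟩
  set i0 : Fin d := Classical.arbitrary (Fin d) with hi0
  set M : Ω → ℝ := fun ω => ⨆ i, X i ω with hMdef
  have hMeq : ∀ ω, M ω = Finset.univ.sup' Finset.univ_nonempty (fun i => X i ω) :=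
    fun ω => (Finset.sup'_univ_eq_ciSup (fun i => X i ω)).symm
  have hMmeas : Measurable M := by
    have h := Finset.measurable_sup' (s := Finset.univ) Finset.univ_nonempty (fun i _ => hX i)
    have heq : Finset.univ.sup' Finset.univ_nonempty X = M := by
      funext ω
      rw [hMeq, Finset.sup'_apply]
    rwa [heq] at h
  have hXleM : ∀ i ω, X i ω ≤ M ω := fun i ω => by
    rw [hMeq]; exact Finset.le_sup' (fun j => X j ω) (Finset.mem_univ i)
  have hXint : ∀ i, Integrable (X i) μ := by
    intro i
    have h1 : Integrable (fun x : ℝ => x) (gaussianReal 0 ⟨σ ^ 2, sq_nonneg σ⟩) := my_gauss_integrable hσ (my_int_IA hσ)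
    rw [← hlaw i] at h1
    exact (integrable_map_measure aestronglyMeasurable_id (hX i).aemeasurable).mp h1
  have hNPmeas : Measurable (fun x : ℝ => max (-x) 0) :=
    measurable_neg.max measurable_const
  have hNPint : Integrable (fun ω => max (-(X i0 ω)) 0) μ := by
    have h1 : Integrable (fun x : ℝ => max (-x) 0) (gaussianReal 0 ⟨σ ^ 2, sq_nonneg σ⟩) := my_gauss_integrable hσ (my_int_INeg hσ)
    rw [← hlaw i0] at h1
    exact (integrable_map_measure hNPmeas.aestronglyMeasurable (hX i0).aemeasurable).mp h1
  have hNPval : ∫ ω, max (-(X i0 ω)) 0 ∂μ ≤ 0.4 * σ := by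
    have h1 : ∫ ω, max (-(X i0 ω)) 0 ∂μ = ∫ x, max (-x) 0 ∂(gaussianReal 0 ⟨σ ^ 2, sq_nonneg σ⟩) := by
      rw [← hlaw i0, integral_map (hX i0).aemeasurable hNPmeas.aestronglyMeasurable]
    rw [h1, my_gauss_integral hσ, my_negpart hσ]
    have hpi : (3.14:ℝ) < π := by linarith [Real.pi_gt_d6]
    have h25 : (2.5:ℝ) ≤ Real.sqrt (2 * π) := by
      rw [show (2.5:ℝ) = Real.sqrt 6.25 by
        rw [show (6.25:ℝ) = 2.5^2 by norm_num, Real.sqrt_sq (by norm_num : (0:ℝ) ≤ 2.5)]]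
      exact Real.sqrt_le_sqrt (by linarith)
    rw [div_le_iff₀ (by positivity)]
    nlinarith
  have hMint : Integrable M μ := by
    have hsum : Integrable (fun ω => ∑ i, |X i ω|) μ :=
      integrable_finset_sum _ (fun i _ => (hXint i).abs)
    refine hsum.mono' hMmeas.aestronglyMeasurable (ae_of_all _ fun ω => ?_)
    rw [Real.norm_eq_abs, abs_le]
    constructor
    · have h1 : |X i0 ω| ≤ ∑ i, |X i ω| :=
        Finset.single_le_sum (f := fun j => |X j ω|) (fun j _ => abs_nonneg _) (Finset.mem_univ i0)
      have h2 := neg_abs_le (X i0 ω)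
      have h3 := hXleM i0 ω
      linarith
    · rw [hMeq]
      refine Finset.sup'_le _ _ fun i _ => ?_
      exact le_trans (le_abs_self _)
        (Finset.single_le_sum (f := fun j => |X j ω|) (fun j _ => abs_nonneg _) (Finset.mem_univ i))
  have master : ∀ t : ℝ, 0 ≤ t →
      t * (μ {ω | t ≤ M ω}).toReal - 0.4 * σ ≤ ∫ ω, M ω ∂μ := by
    intro t ht
    have hNmeas : MeasurableSet {ω | t ≤ M ω} := measurableSet_le measurable_const hMmeas
    have hindint : Integrable (fun ω => Set.indicator {ω | t ≤ M ω} (fun _ => t) ω) μ :=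
      (integrable_const t).indicator hNmeas
    have hle : ∀ ω, Set.indicator {ω | t ≤ M ω} (fun _ => t) ω - max (-(X i0 ω)) 0 ≤ M ω := by
      intro ω
      by_cases h : ω ∈ {ω | t ≤ M ω}
      · rw [Set.indicator_of_mem h]
        have h2 := le_max_right (-(X i0 ω)) 0
        have h3 : t ≤ M ω := h
        linarith
      · rw [Set.indicator_of_notMem h]
        have h2 : -(max (-(X i0 ω)) 0) ≤ X i0 ω := by
          have := le_max_left (-(X i0 ω)) 0; linarith
        have h3 := hXleM i0 ω
        linarith
    have hmono := integral_mono (hindint.sub hNPint) hMint hle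
    simp only [Pi.sub_apply] at hmono
    rw [integral_sub hindint hNPint, integral_indicator_const t hNmeas, smul_eq_mul] at hmono
    have hcomm : (μ {ω | t ≤ M ω}).toReal * t = t * (μ {ω | t ≤ M ω}).toReal := mul_comm _ _
    rw [measureReal_def] at hmono
    linarith
  have hL1 : 0 < Real.log (d:ℝ) := Real.log_pos (by exact_mod_cast Nat.lt_of_lt_of_le one_lt_two hd)
  obtain ⟨r, hr⟩ : ∃ r, r = Real.sqrt (Real.log (d:ℝ)) := ⟨_, rfl⟩
  rw [ge_iff_le, ← hr]
  have hr0 : (0:ℝ) ≤ r := hr ▸ Real.sqrt_nonneg _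
  have hr2 : r ^ 2 = Real.log (d:ℝ) := by rw [hr]; exact Real.sq_sqrt hL1.le
  by_cases hsmall : 0.13 * r ≤ 0.3
  · have h0 := master 0 le_rfl
    simp only [zero_mul, zero_sub] at h0
    nlinarith [mul_nonneg (by linarith : (0:ℝ) ≤ 0.3 - 0.13 * r) hσ.le]
  · push_neg at hsmall
    obtain ⟨t, htdef⟩ : ∃ t, t = 0.26 * r * σ := ⟨_, rfl⟩
    have ht : 0 ≤ t := by rw [htdef]; positivity
    have hNmeas : MeasurableSet {ω | t ≤ M ω} := measurableSet_le measurable_const hMmeas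
    have hcompl : {ω | t ≤ M ω}ᶜ = ⋂ i, X i ⁻¹' (Iio t) := by
      ext ω
      simp only [Set.mem_compl_iff, Set.mem_setOf_eq, not_le, Set.mem_iInter,
        Set.mem_preimage, Set.mem_Iio]
      rw [hMeq ω, Finset.sup'_lt_iff]
      exact ⟨fun h i => h i (Finset.mem_univ i), fun h i _ => h i⟩
    have hprod : μ ({ω | t ≤ M ω}ᶜ) = ((gaussianReal 0 ⟨σ ^ 2, sq_nonneg σ⟩) (Iio t)) ^ d := by
      rw [hcompl, hindep.meas_iInter (fun i => ⟨Iio t, measurableSet_Iio, rfl⟩)]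
      have heach : ∀ i : Fin d, μ (X i ⁻¹' (Iio t))
          = (gaussianReal 0 ⟨σ ^ 2, sq_nonneg σ⟩) (Iio t) := fun i => by
        rw [← Measure.map_apply (hX i) measurableSet_Iio, hlaw i]
      simp only [heach]
      rw [Finset.prod_const, Finset.card_univ, Fintype.card_fin]
    haveI : IsProbabilityMeasure (gaussianReal 0 ⟨σ ^ 2, sq_nonneg σ⟩) :=
      instIsProbabilityMeasureGaussianReal 0 _
    obtain ⟨Q, hQdef⟩ : ∃ q, q = ((gaussianReal 0 ⟨σ ^ 2, sq_nonneg σ⟩) (Ici t)).toReal := ⟨_, rfl⟩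
    have hQnonneg : 0 ≤ Q := hQdef ▸ ENNReal.toReal_nonneg
    have hPval : ((gaussianReal 0 ⟨σ ^ 2, sq_nonneg σ⟩) (Iio t)).toReal = 1 - Q := by
      have h1 : (gaussianReal 0 ⟨σ ^ 2, sq_nonneg σ⟩) (Iio t)
          = 1 - (gaussianReal 0 ⟨σ ^ 2, sq_nonneg σ⟩) (Ici t) := by
        rw [← Set.compl_Ici (a := t)]
        exact prob_compl_eq_one_sub measurableSet_Ici
      rw [h1, ENNReal.toReal_sub_of_le prob_le_one ENNReal.one_ne_top, ENNReal.toReal_one, hQdef]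
    have hPnn : (0:ℝ) ≤ 1 - Q := by rw [← hPval]; exact ENNReal.toReal_nonneg
    have htail := my_tail hσ ht
    rw [← hQdef] at htail
    have hpdfval : σ * gaussianPDFReal 0 ⟨σ ^ 2, sq_nonneg σ⟩ (t + σ)
        = (Real.sqrt (2 * π))⁻¹ * rexp (-((0.26 * r + 1) ^ 2 / 2)) := by
      rw [my_pdf_eq hσ]
      have hexp : -((2 * σ ^ 2)⁻¹) * (t + σ) ^ 2 = -((0.26 * r + 1) ^ 2 / 2) := by
        rw [htdef]; field_simp
      rw [hexp]
      have hs2 : Real.sqrt (2 * π) ≠ 0 := by positivity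
      field_simp
    have hμN : (μ {ω | t ≤ M ω}).toReal = 1 - (1 - Q) ^ d := by
      have h2 : μ {ω | t ≤ M ω} = 1 - μ ({ω | t ≤ M ω}ᶜ) := by
        conv_lhs => rw [← compl_compl {ω | t ≤ M ω}]
        exact prob_compl_eq_one_sub hNmeas.compl
      rw [h2, hprod, ENNReal.toReal_sub_of_le (pow_le_one' prob_le_one d) ENNReal.one_ne_top,
        ENNReal.toReal_one, ENNReal.toReal_pow, hPval]
    have hdQ : Real.log 2 ≤ (d:ℝ) * Q := by
      have hQge : (Real.sqrt (2 * π))⁻¹ * rexp (-((0.26 * r + 1) ^ 2 / 2)) ≤ Q := by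
        rw [← hpdfval]; exact htail
      have hdpos : (0:ℝ) < d := by exact_mod_cast hd0
      have hdexp : (d:ℝ) = rexp (Real.log (d:ℝ)) := (Real.exp_log hdpos).symm
      have hLc : 1 ≤ Real.log (d:ℝ) - (0.26 * r + 1) ^ 2 / 2 := by nlinarith [hr2, hsmall]
      have hsqrt26 : Real.sqrt (2 * π) ≤ 2.6 := by
        rw [show (2.6:ℝ) = Real.sqrt 6.76 by
          rw [show (6.76:ℝ) = 2.6 ^ 2 by norm_num, Real.sqrt_sq (by norm_num : (0:ℝ) ≤ 2.6)]]
        exact Real.sqrt_le_sqrt (by linarith [Real.pi_lt_d2])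
      have hsqrtpos : (0:ℝ) < Real.sqrt (2 * π) := by positivity
      have hchain : rexp 1 / 2.6 ≤ (d:ℝ) * Q := by
        calc rexp 1 / 2.6
            ≤ rexp (Real.log (d:ℝ) - (0.26 * r + 1) ^ 2 / 2) / Real.sqrt (2 * π) := by
              apply div_le_div₀ (Real.exp_nonneg _) (Real.exp_le_exp.mpr hLc) hsqrtpos hsqrt26
          _ = (d:ℝ) * ((Real.sqrt (2 * π))⁻¹ * rexp (-((0.26 * r + 1) ^ 2 / 2))) := by
              conv_lhs => rw [show Real.log (d:ℝ) - (0.26 * r + 1) ^ 2 / 2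
                = Real.log (d:ℝ) + (-((0.26 * r + 1) ^ 2 / 2)) by ring]
              rw [Real.exp_add, div_eq_mul_inv, ← hdexp]
              ring
          _ ≤ (d:ℝ) * Q := mul_le_mul_of_nonneg_left hQge (by positivity)
      have he : (2.718:ℝ) ≤ rexp 1 := by linarith [Real.exp_one_gt_d9]
      have hlog2 : Real.log 2 < 0.6931471808 := Real.log_two_lt_d9
      have h4 : (2.718:ℝ) / 2.6 ≤ rexp 1 / 2.6 := by gcongr
      have h5 : (0.6931471808:ℝ) < 2.718 / 2.6 := by norm_num
      linarith
    have hhalf : (1:ℝ) / 2 ≤ (μ {ω | t ≤ M ω}).toReal := by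
      rw [hμN]
      have hP1 : (1 - Q) ≤ rexp (-Q) := by linarith [Real.add_one_le_exp (-Q)]
      have hpow : (1 - Q) ^ d ≤ rexp (-Q) ^ d := pow_le_pow_left₀ hPnn hP1 d
      have hexp : rexp (-Q) ^ d = rexp ((d:ℝ) * (-Q)) := by
        rw [← Real.exp_nat_mul]
      have hfin : rexp ((d:ℝ) * (-Q)) ≤ 1 / 2 := by
        rw [show (d:ℝ) * (-Q) = -((d:ℝ) * Q) by ring]
        calc rexp (-((d:ℝ) * Q)) ≤ rexp (-(Real.log 2)) := Real.exp_le_exp.mpr (by linarith)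
          _ = 1 / 2 := by rw [Real.exp_neg, Real.exp_log two_pos]; norm_num
      linarith
    have hfin := master t ht
    have h1 : 0.13 * σ * r ≤ t * (μ {ω | t ≤ M ω}).toReal := by
      calc 0.13 * σ * r = t * (1 / 2) := by rw [htdef]; ring
        _ ≤ t * (μ {ω | t ≤ M ω}).toReal := mul_le_mul_of_nonneg_left hhalf ht
    linarith
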